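/- Suppose Σ² is a compact surface in Sol³ with constant mean curvature f, shape operator A, unit normal ξ, and Gaussian curvature K, and suppose the Simons-type identity (1/2)Δ|A|² = |∇A|² + 4 div(⟨ξ,E₃⟩ A E₃^⊤) - 4 div(f⟨ξ,E₃⟩ E₃^⊤) + 2K(|A|² - 2f²) - 8⟨ξ,E₃⟩²(1 - ⟨ξ,E₃⟩²) holds. If K(|A|² - 2f²) ≥ 1 on Σ², then integrating over Σ² yields ∇A = 0 (so |A|² is constant), K(|A|² - 2f²) = 1, K is constant, and ⟨ξ,E₃⟩² = 1/2 on Σ². -/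
import Mathlib


open MeasureTheory

/-- let Σ² be a compact CMC surface in Sol³ (modelled by a compact space
M with its Riemannian measure μ), with constant mean curvature f, |A]² = nA2,
Δ|A|² = lapA2, |∇A|² = nDA2, Gaussian curvature K, ⟨ξ,E₃⟩ = c, and divergence terms
d1 = div(⟨ξ,E₃⟩AE₃^⊤), d2 = div(f⟨ξ,E₃⟩E₃^⊤). Granting the Simons-type identity
(1/2)Δ|A|² = |∇A|² + 4d1 - 4d2 + 2K(|A|² - 2f²) - 8c²(1 - c²), the vanishing of the
integrals of the Laplacian and divergences (divergence theorem), and that ∇A = 0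
forces |A|² constant: if K(|A|² - 2f²) ≥ 1 on Σ², then ∇A = 0, |A|² is constant,
K(|A|² - 2f²) = 1, K is constant, and ⟨ξ,E₃⟩² = 1/2 on Σ². -/
theorem simons_gap_rigidity
    {M : Type*} [TopologicalSpace M] [CompactSpace M]
    [MeasurableSpace M] [BorelSpace M]
    (μ : Measure M) [IsFiniteMeasure μ] [μ.IsOpenPosMeasure]
    (f : ℝ) (nA2 lapA2 nDA2 K c d1 d2 : M → ℝ)
    (hnA2 : Continuous nA2) (hlapA2 : Continuous lapA2) (hnDA2 : Continuous nDA2)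
    (hK : Continuous K) (hc : Continuous c)
    (hd1 : Continuous d1) (hd2 : Continuous d2)
    (hSimons : ∀ x, (1 / 2) * lapA2 x =
      nDA2 x + 4 * d1 x - 4 * d2 x + 2 * K x * (nA2 x - 2 * f ^ 2)
        - 8 * (c x) ^ 2 * (1 - (c x) ^ 2))
    (hDApos : ∀ x, 0 ≤ nDA2 x)
    (hcbd : ∀ x, (c x) ^ 2 ≤ 1)
    (hlapInt : ∫ x, lapA2 x ∂μ = 0)
    (hd1Int : ∫ x, d1 x ∂μ = 0)
    (hd2Int : ∫ x, d2 x ∂μ = 0)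
    (hgap : ∀ x, 1 ≤ K x * (nA2 x - 2 * f ^ 2))
    (hDAconst : (∀ x, nDA2 x = 0) → ∀ x y, nA2 x = nA2 y) :
    (∀ x, nDA2 x = 0) ∧ (∀ x y, nA2 x = nA2 y) ∧
    (∀ x, K x * (nA2 x - 2 * f ^ 2) = 1) ∧ (∀ x y, K x = K y) ∧
    (∀ x, (c x) ^ 2 = 1 / 2) := by
  -- the nonnegative "defect" function
  set g : M → ℝ := fun x =>
    nDA2 x + 2 * (K x * (nA2 x - 2 * f ^ 2) - 1) + (2 - 8 * (c x) ^ 2 * (1 - (c x) ^ 2))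
    with hg
  have hgcont : Continuous g := by
    apply Continuous.add
    apply Continuous.add hnDA2
    · exact (continuous_const.mul (((hK.mul (hnA2.sub continuous_const))).sub continuous_const))
    · exact continuous_const.sub ((continuous_const.mul (hc.pow 2)).mul
        (continuous_const.sub (hc.pow 2)))
  have hgnonneg : ∀ x, 0 ≤ g x := by
    intro x
    have h1 := hDApos x
    have h2 := hgap x
    have h3 : 8 * (c x) ^ 2 * (1 - (c x) ^ 2) ≤ 2 := by nlinarith [sq_nonneg ((c x) ^ 2 - 1 / 2)]
    simp only [hg]; linarith
  -- g equals a combination whose integral vanishes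
  have hgeq : ∀ x, g x = (1 / 2) * lapA2 x - 4 * d1 x + 4 * d2 x := by
    intro x; have := hSimons x; simp only [hg]; linarith
  have hint : ∀ (h : M → ℝ), Continuous h → Integrable h μ := fun h hh =>
    hh.integrable_of_hasCompactSupport (HasCompactSupport.of_compactSpace h)
  have hgInt : ∫ x, g x ∂μ = 0 := by
    calc ∫ x, g x ∂μ = ∫ x, ((1 / 2) * lapA2 x - 4 * d1 x + 4 * d2 x) ∂μ := by
          exact integral_congr_ae (Filter.Eventually.of_forall hgeq)
      _ = (∫ x, ((1 / 2) * lapA2 x - 4 * d1 x) ∂μ) + ∫ x, 4 * d2 x ∂μ := by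
          exact integral_add (((hint _ hlapA2).const_mul _).sub ((hint _ hd1).const_mul _))
            ((hint _ hd2).const_mul _)
      _ = ((∫ x, (1 / 2) * lapA2 x ∂μ) - ∫ x, 4 * d1 x ∂μ) + ∫ x, 4 * d2 x ∂μ := by
          rw [integral_sub ((hint _ hlapA2).const_mul _) ((hint _ hd1).const_mul _)]
      _ = 0 := by
          rw [integral_const_mul, integral_const_mul, integral_const_mul,
            hlapInt, hd1Int, hd2Int]; ring
  -- hence g = 0 everywhere
  have hg0 : ∀ x, g x = 0 := by
    have hae : g =ᵐ[μ] 0 :=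
      (integral_eq_zero_iff_of_nonneg (fun x => hgnonneg x) (hint _ hgcont)).mp hgInt
    have := (Continuous.ae_eq_iff_eq μ hgcont continuous_const).mp hae
    intro x; exact congrFun this x
  -- each nonnegative summand vanishes
  have hDA0 : ∀ x, nDA2 x = 0 := by
    intro x
    have h := hg0 x
    have h2 := hgap x
    have h3 : 8 * (c x) ^ 2 * (1 - (c x) ^ 2) ≤ 2 := by nlinarith [sq_nonneg ((c x) ^ 2 - 1 / 2)]
    have := hDApos x
    simp only [hg] at h; linarith
  have hK1 : ∀ x, K x * (nA2 x - 2 * f ^ 2) = 1 := by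
    intro x
    have h := hg0 x
    have h3 : 8 * (c x) ^ 2 * (1 - (c x) ^ 2) ≤ 2 := by nlinarith [sq_nonneg ((c x) ^ 2 - 1 / 2)]
    have h2 := hgap x
    have := hDApos x
    simp only [hg] at h; linarith
  have hc2 : ∀ x, (c x) ^ 2 = 1 / 2 := by
    intro x
    have h := hg0 x
    have h2 := hgap x
    have := hDApos x
    simp only [hg] at h
    nlinarith [sq_nonneg ((c x) ^ 2 - 1 / 2)]
  have hA2const := hDAconst hDA0
  refine ⟨hDA0, hA2const, hK1, ?_, hc2⟩
  intro x y
  have hx := hK1 x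
  have hy := hK1 y
  have hxy : nA2 x = nA2 y := hA2const x y
  have hne : nA2 x - 2 * f ^ 2 ≠ 0 := by
    intro h0; rw [h0, mul_zero] at hx; norm_num at hx
  rw [hxy] at hx hne
  exact mul_right_cancel₀ hne (hx.trans hy.symm)
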